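/- With $S$, $P_a$, $Q$ as in the Bedford-McMullen setup and for any probability vector $\underline{p}$ on $Q$, the vector $\underline{p}'$ defined by $p'_{a,b} = p_a / T_a$ (where $p_a = \sum_{b \in P_a} p_{a,b}$ and $T_a = |P_a|$) satisfies $h(\underline{p}') \geq h(\underline{p})$ and $h_r(\underline{p}') = h_r(\underline{p})$. -/
import Mathlib


open Real Finset

lemma row_jensen (ι : Type*) [Fintype ι] [Nonempty ι] (f : ι → ℝ) (h0 : ∀ i, 0 ≤ f i) :
    (Fintype.card ι : ℝ) *
      (((∑ i, f i) / (Fintype.card ι : ℝ)) * Real.log ((∑ i, f i) / (Fintype.card ι : ℝ)))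
      ≤ ∑ i, f i * Real.log (f i) := by
  have hT : (0 : ℝ) < (Fintype.card ι : ℝ) := by positivity
  have h := convexOn_mul_log.map_sum_le (t := Finset.univ)
      (w := fun _ : ι => (Fintype.card ι : ℝ)⁻¹) (p := f)
      (fun i _ => by positivity)
      (by simp)
      (fun i _ => h0 i)
  simp only [smul_eq_mul] at h
  rw [← Finset.mul_sum] at h
  have h2 : ((Fintype.card ι : ℝ)⁻¹ * ∑ i, f i) = (∑ i, f i) / (Fintype.card ι : ℝ) := by
    ring
  rw [h2] at h
  calc (Fintype.card ι : ℝ) *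
      (((∑ i, f i) / (Fintype.card ι : ℝ)) * Real.log ((∑ i, f i) / (Fintype.card ι : ℝ)))
      ≤ (Fintype.card ι : ℝ) * ∑ i, (Fintype.card ι : ℝ)⁻¹ * (f i * Real.log (f i)) := by
        exact mul_le_mul_of_nonneg_left h hT.le
    _ = ∑ i, f i * Real.log (f i) := by
        rw [← Finset.mul_sum]; field_simp

/-- Row-averaging increases entropy and preserves row-entropy: for a probability vector `p`
on `Q = Σ a, P a`, the vector `p'` with `p' (a,b) = p_a / T_a` satisfies
`h(p') ≥ h(p)` and `h_r(p') = h_r(p)`. -/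
theorem stmt4 (S : Type*) [Fintype S] [Nonempty S] (P : S → Type*) [∀ a, Fintype (P a)]
    [∀ a, Nonempty (P a)]
    (p : (Σ a : S, P a) → ℝ) (hp0 : ∀ q, 0 ≤ p q) (hp1 : ∑ q : (Σ a : S, P a), p q = 1) :
    (-∑ q : (Σ a : S, P a), p q * Real.log (p q))
        ≤ (-∑ q : (Σ a : S, P a),
            ((∑ b : P q.1, p ⟨q.1, b⟩) / (Fintype.card (P q.1) : ℝ)) *
              Real.log ((∑ b : P q.1, p ⟨q.1, b⟩) / (Fintype.card (P q.1) : ℝ))) ∧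
      (-∑ a : S,
          (∑ b : P a, ((∑ b' : P a, p ⟨a, b'⟩) / (Fintype.card (P a) : ℝ))) *
            Real.log (∑ b : P a, ((∑ b' : P a, p ⟨a, b'⟩) / (Fintype.card (P a) : ℝ))))
        = (-∑ a : S, (∑ b : P a, p ⟨a, b⟩) * Real.log (∑ b : P a, p ⟨a, b⟩)) := by
  have hsum : ∀ a : S, (∑ b : P a, ((∑ b' : P a, p ⟨a, b'⟩) / (Fintype.card (P a) : ℝ)))
      = ∑ b : P a, p ⟨a, b⟩ := by
    intro a
    rw [Finset.sum_const, Finset.card_univ, nsmul_eq_mul]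
    have : (Fintype.card (P a) : ℝ) ≠ 0 := by positivity
    field_simp
  constructor
  · rw [neg_le_neg_iff]
    rw [← Finset.univ_sigma_univ, Finset.sum_sigma, Finset.sum_sigma]
    apply Finset.sum_le_sum
    intro a _
    have := row_jensen (P a) (fun b => p ⟨a, b⟩) (fun b => hp0 _)
    calc ∑ b : P a, ((∑ b' : P a, p ⟨a, b'⟩) / (Fintype.card (P a) : ℝ)) *
          Real.log ((∑ b' : P a, p ⟨a, b'⟩) / (Fintype.card (P a) : ℝ))
        = (Fintype.card (P a) : ℝ) * (((∑ b' : P a, p ⟨a, b'⟩) / (Fintype.card (P a) : ℝ)) *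
            Real.log ((∑ b' : P a, p ⟨a, b'⟩) / (Fintype.card (P a) : ℝ))) := by
          rw [Finset.sum_const, Finset.card_univ, nsmul_eq_mul]
      _ ≤ ∑ b : P a, p ⟨a, b⟩ * Real.log (p ⟨a, b⟩) := this
  · congr 1
    apply Finset.sum_congr rfl
    intro a _
    rw [hsum a]
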